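/- Let (δ_t)_{t≥1} be i.i.d. real random variables with E[e^{ω₀ δ_1}] = 1 for some ω₀ > 0, and define the CUSUM statistic s_0 = 0, s_t = max(s_{t-1} + δ_t, 0). Let T = inf{t : s_t ≥ h} for threshold h > 0. Then E[T] ≥ e^{ω₀ h}. -/

import Mathlib

open MeasureTheory ProbabilityTheory Real ENNReal

/-- For i.i.d. increments `δ_t` with `E[e^{ω₀ δ_1}] = 1`, `ω₀ > 0`, the CUSUM
statistic `s_0 = 0`, `s_t = max(s_{t-1} + δ_t, 0)` and stopping time
`T = inf{t : s_t ≥ h}` (threshold `h > 0`) satisfy `E[T] ≥ e^{ω₀ h}`. -/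
theorem cusum_arl_lower_bound
    {Ω : Type*} [MeasurableSpace Ω] (μ : Measure Ω) [IsProbabilityMeasure μ]
    (δ : ℕ → Ω → ℝ) (hmeas : ∀ t, Measurable (δ t))
    (hindep : iIndepFun δ μ)
    (hident : ∀ t, Measure.map (δ t) μ = Measure.map (δ 1) μ)
    (ω₀ : ℝ) (hω₀ : 0 < ω₀)
    (hmgf : ∫ ω, Real.exp (ω₀ * δ 1 ω) ∂μ = 1)
    (s : ℕ → Ω → ℝ)
    (hs0 : ∀ ω, s 0 ω = 0)
    (hs : ∀ t ω, s (t + 1) ω = max (s t ω + δ (t + 1) ω) 0)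
    (h : ℝ) (hh : 0 < h) :
    ENNReal.ofReal (Real.exp (ω₀ * h)) ≤
      ∫⁻ ω, (⨅ (t : ℕ) (_ : h ≤ s t ω), (t : ℝ≥0∞)) ∂μ := by
  classical
  -- notation for the stopping time
  set Texp : Ω → ℝ≥0∞ := fun ω => ⨅ (t : ℕ) (_ : h ≤ s t ω), (t : ℝ≥0∞) with hTexp
  -- basic measurability of s
  have meas_s : ∀ t, Measurable (s t) := by
    intro t
    induction t with
    | zero =>
      rw [show s 0 = fun _ => (0 : ℝ) from funext hs0]; exact measurable_const
    | succ n ih =>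
      rw [show s (n + 1) = fun ω => max (s n ω + δ (n + 1) ω) 0 from funext (hs n)]
      exact (ih.add (hmeas (n + 1))).max measurable_const
  have s_nonneg : ∀ t ω, 0 ≤ s t ω := by
    intro t ω
    cases t with
    | zero => exact (hs0 ω).ge
    | succ n => rw [hs n ω]; exact le_max_right _ _
  -- block sigma-algebras
  set 𝔖 : Set ℕ → MeasurableSpace Ω :=
    fun I => ⨆ i ∈ I, MeasurableSpace.comap (δ i) inferInstance with h𝔖
  have h𝔖le : ∀ I, 𝔖 I ≤ ‹MeasurableSpace Ω› := fun I =>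
    iSup₂_le fun i _ => measurable_iff_comap_le.mp (hmeas i)
  have h𝔖mono : ∀ {I J : Set ℕ}, I ⊆ J → 𝔖 I ≤ 𝔖 J := fun {I J} hIJ =>
    iSup₂_le fun i hi =>
      le_iSup₂ (f := fun i (_ : i ∈ J) => MeasurableSpace.comap (δ i) inferInstance) i (hIJ hi)
  have hSmonoSet : ∀ {m₁ m₂ : MeasurableSpace Ω} {A : Set Ω}, m₁ ≤ m₂ →
      MeasurableSet[m₁] A → MeasurableSet[m₂] A := fun hle hA => hle _ hA
  have hone : ∀ m : MeasurableSpace Ω, @Measurable Ω ℝ≥0∞ m _ (fun _ => (1 : ℝ≥0∞)) :=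
    fun m => @measurable_const _ _ _ m _
  have hδ𝔖 : ∀ {i : ℕ} {I : Set ℕ}, i ∈ I → Measurable[𝔖 I] (δ i) := by
    intro i I hi
    have h1 : Measurable[MeasurableSpace.comap (δ i) inferInstance] (δ i) :=
      Measurable.of_comap_le le_rfl
    exact h1.mono
      (le_iSup₂ (f := fun i (_ : i ∈ I) => MeasurableSpace.comap (δ i) inferInstance) i hi) le_rfl
  have hIndep : ∀ {S T : Set ℕ}, Disjoint S T → Indep (𝔖 S) (𝔖 T) μ := fun hST =>
    indep_iSup_of_disjoint (fun i => measurable_iff_comap_le.mp (hmeas i)) hindep hST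
  have hmul : ∀ {S T : Set ℕ} {f g : Ω → ℝ≥0∞}, Disjoint S T → Measurable[𝔖 S] f →
      Measurable[𝔖 T] g → ∫⁻ ω, f ω * g ω ∂μ = (∫⁻ ω, f ω ∂μ) * ∫⁻ ω, g ω ∂μ :=
    fun hST hf hg => lintegral_mul_eq_lintegral_mul_lintegral_of_independent_measurableSpace
      (h𝔖le _) (h𝔖le _) (hIndep hST) hf hg
  -- the exponential weights
  set G : ℕ → Ω → ℝ≥0∞ := fun i ω => ENNReal.ofReal (Real.exp (ω₀ * δ i ω)) with hG
  set P : Finset ℕ → Ω → ℝ≥0∞ := fun I ω => ∏ i ∈ I, G i ω with hP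
  have hGmeas𝔖 : ∀ {i : ℕ} {I : Set ℕ}, i ∈ I → Measurable[𝔖 I] (G i) := fun hi =>
    (((hδ𝔖 hi).const_mul ω₀).exp).ennreal_ofReal
  have hGmeas : ∀ i, Measurable (G i) := fun i => (((hmeas i).const_mul ω₀).exp).ennreal_ofReal
  have hPmeas𝔖 : ∀ I : Finset ℕ, Measurable[𝔖 ↑I] (P I) := fun I =>
    Finset.measurable_prod I fun i hi => hGmeas𝔖 (Finset.mem_coe.mpr hi)
  have hPmeas : ∀ I : Finset ℕ, Measurable (P I) := fun I =>
    Finset.measurable_prod I fun i _ => hGmeas i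
  -- each factor has lintegral 1
  have hexp_int : Integrable (fun ω => Real.exp (ω₀ * δ 1 ω)) μ := by
    by_contra hi
    rw [integral_undef hi] at hmgf
    exact one_ne_zero hmgf.symm
  have hG1 : ∀ i, ∫⁻ ω, G i ω ∂μ = 1 := by
    intro i
    have hmx : Measurable fun x : ℝ => ENNReal.ofReal (Real.exp (ω₀ * x)) :=
      ((measurable_id.const_mul ω₀).exp).ennreal_ofReal
    have key : ∫⁻ ω, G 1 ω ∂μ = 1 := by
      rw [hG]
      rw [← ofReal_integral_eq_lintegral_ofReal hexp_int
        (Filter.Eventually.of_forall fun ω => (Real.exp_pos _).le), hmgf, ENNReal.ofReal_one]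
    calc ∫⁻ ω, G i ω ∂μ
        = ∫⁻ x, ENNReal.ofReal (Real.exp (ω₀ * x)) ∂(Measure.map (δ i) μ) := by
          rw [lintegral_map hmx (hmeas i)]
      _ = ∫⁻ x, ENNReal.ofReal (Real.exp (ω₀ * x)) ∂(Measure.map (δ 1) μ) := by rw [hident i]
      _ = 1 := by rw [lintegral_map hmx (hmeas 1)]; exact key
  have hP1 : ∀ I : Finset ℕ, ∫⁻ ω, P I ω ∂μ = 1 := by
    intro I
    induction I using Finset.induction_on with
    | empty => simp [hP]
    | @insert a I₀ ha ih =>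
      have hprod : ∀ ω, P (insert a I₀) ω = G a ω * P I₀ ω := by
        intro ω; rw [hP]; exact Finset.prod_insert ha
      have hdisj : Disjoint ({a} : Set ℕ) ↑I₀ := by
        simpa [Set.disjoint_singleton_left] using ha
      calc ∫⁻ ω, P (insert a I₀) ω ∂μ = ∫⁻ ω, G a ω * P I₀ ω ∂μ := by
            simp_rw [hprod]
        _ = (∫⁻ ω, G a ω ∂μ) * ∫⁻ ω, P I₀ ω ∂μ :=
            hmul hdisj (hGmeas𝔖 (Set.mem_singleton a)) (hPmeas𝔖 I₀)
        _ = 1 := by rw [hG1, ih, mul_one]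
  -- P as exponential of the partial sum
  have hPW : ∀ (I : Finset ℕ) ω, P I ω = ENNReal.ofReal (Real.exp (ω₀ * ∑ i ∈ I, δ i ω)) := by
    intro I ω
    induction I using Finset.induction_on with
    | empty => simp [hP]
    | @insert a I₀ ha ih =>
      show ∏ i ∈ insert a I₀, G i ω = _
      rw [Finset.prod_insert ha, show (∏ i ∈ I₀, G i ω) = P I₀ ω from rfl, ih,
        Finset.sum_insert ha, mul_add, Real.exp_add,
        ENNReal.ofReal_mul (Real.exp_pos _).le]
  -- the key sets
  set D : ℕ → Set Ω := fun k => {ω | s k ω = 0 ∧ ∀ j ≤ k, s j ω < h} with hD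
  set C : ℕ → ℕ → Set Ω := fun k t =>
    {ω | h ≤ ∑ i ∈ Finset.Ioc k t, δ i ω ∧
      ∀ r, k < r → r < t → ∑ i ∈ Finset.Ioc k r, δ i ω < h} with hC
  -- measurability of s with respect to block sigma-algebras
  have hs𝔖 : ∀ k j, j ≤ k → Measurable[𝔖 (Set.Iic k)] (s j) := by
    intro k j hj
    induction j with
    | zero =>
      rw [show s 0 = fun _ => (0 : ℝ) from funext hs0]; exact measurable_const
    | succ n ih =>
      rw [show s (n + 1) = fun ω => max (s n ω + δ (n + 1) ω) 0 from funext (hs n)]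
      exact ((ih (Nat.le_of_succ_le hj)).add (hδ𝔖 (Set.mem_Iic.mpr hj))).max measurable_const
  have hD𝔖 : ∀ k, MeasurableSet[𝔖 (Set.Iic k)] (D k) := by
    intro k
    have h1 : MeasurableSet[𝔖 (Set.Iic k)] {ω | s k ω = 0} :=
      (hs𝔖 k k le_rfl) (measurableSet_singleton (0 : ℝ))
    have h2 : MeasurableSet[𝔖 (Set.Iic k)] {ω | ∀ j ≤ k, s j ω < h} := by
      have : {ω | ∀ j ≤ k, s j ω < h} = ⋂ j, ⋂ (_ : j ≤ k), {ω | s j ω < h} := by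
        ext ω; simp
      rw [this]
      exact MeasurableSet.iInter fun j => MeasurableSet.iInter fun hj =>
        measurableSet_lt (hs𝔖 k j hj) measurable_const
    have : D k = {ω | s k ω = 0} ∩ {ω | ∀ j ≤ k, s j ω < h} := by
      ext ω; simp only [hD, Set.mem_setOf_eq, Set.mem_inter_iff]
    rw [this]; exact h1.inter h2
  have hW𝔖 : ∀ k t r, r ≤ t →
      Measurable[𝔖 (Set.Ioc k t)] (fun ω => ∑ i ∈ Finset.Ioc k r, δ i ω) := by
    intro k t r hr
    exact Finset.measurable_sum _ fun i hi => by
      have := Finset.mem_Ioc.mp hi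
      exact hδ𝔖 (Set.mem_Ioc.mpr ⟨this.1, le_trans this.2 hr⟩)
  have hC𝔖 : ∀ k t, MeasurableSet[𝔖 (Set.Ioc k t)] (C k t) := by
    intro k t
    have h1 : MeasurableSet[𝔖 (Set.Ioc k t)] {ω | h ≤ ∑ i ∈ Finset.Ioc k t, δ i ω} :=
      measurableSet_le measurable_const (hW𝔖 k t t le_rfl)
    have h2 : MeasurableSet[𝔖 (Set.Ioc k t)]
        {ω | ∀ r, k < r → r < t → ∑ i ∈ Finset.Ioc k r, δ i ω < h} := by
      have : {ω | ∀ r, k < r → r < t → ∑ i ∈ Finset.Ioc k r, δ i ω < h}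
          = ⋂ r, ⋂ (_ : k < r), ⋂ (_ : r < t), {ω | ∑ i ∈ Finset.Ioc k r, δ i ω < h} := by
        ext ω; simp
      rw [this]
      exact MeasurableSet.iInter fun r => MeasurableSet.iInter fun _ =>
        MeasurableSet.iInter fun hrt => measurableSet_lt (hW𝔖 k t r hrt.le) measurable_const
    have : C k t = {ω | h ≤ ∑ i ∈ Finset.Ioc k t, δ i ω} ∩
        {ω | ∀ r, k < r → r < t → ∑ i ∈ Finset.Ioc k r, δ i ω < h} := by
      ext ω; simp [hC, Set.mem_setOf_eq, Set.mem_inter_iff]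
    rw [this]; exact h1.inter h2
  have hDmeas : ∀ k, MeasurableSet (D k) := fun k => h𝔖le _ _ (hD𝔖 k)
  have hCmeas : ∀ k t, MeasurableSet (C k t) := fun k t => h𝔖le _ _ (hC𝔖 k t)
  -- C k t is empty for t ≤ k
  have hCempty : ∀ k t, t ≤ k → C k t = ∅ := by
    intro k t ht
    ext ω
    simp only [hC, Set.mem_setOf_eq, Set.mem_empty_iff_false, iff_false, not_and]
    intro h1
    rw [Finset.Ioc_eq_empty (by omega), Finset.sum_empty] at h1
    exact absurd h1 (not_le.mpr hh)
  -- disjointness of the C k t over t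
  have hCdisj : ∀ k t t', t < t' → ∀ ω, ω ∈ C k t → ω ∈ C k t' → False := by
    intro k t t' htt' ω h₁ h₂
    obtain ⟨hW1, -⟩ := h₁
    obtain ⟨-, hW2⟩ := h₂
    have hkt : k < t := by
      by_contra hk
      rw [Finset.Ioc_eq_empty (by omega), Finset.sum_empty] at hW1
      exact absurd hW1 (not_le.mpr hh)
    exact absurd hW1 (not_le.mpr (hW2 t hkt htt'))
  -- the key per-(k, n) estimate (Wald / Ville inequality)
  have key1 : ∀ k n, ENNReal.ofReal (Real.exp (ω₀ * h)) * ∑ t ∈ Finset.range n, μ (D k ∩ C k t)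
      ≤ μ (D k) := by
    intro k n
    -- per-term estimate
    have step : ∀ t, t ≤ n → ENNReal.ofReal (Real.exp (ω₀ * h)) * μ (D k ∩ C k t) ≤
        ∫⁻ ω, (D k ∩ C k t).indicator (fun _ => (1 : ℝ≥0∞)) ω * P (Finset.Ioc k n) ω ∂μ := by
      intro t htn
      rcases le_or_gt t k with htk | hkt
      · rw [hCempty k t htk]
        simp
      · -- k < t ≤ n
        have stepA : ENNReal.ofReal (Real.exp (ω₀ * h)) * μ (D k ∩ C k t) ≤
            ∫⁻ ω, (D k ∩ C k t).indicator (fun _ => (1 : ℝ≥0∞)) ω * P (Finset.Ioc k t) ω ∂μ := by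
          have hpt : ∀ ω, (D k ∩ C k t).indicator
              (fun _ => ENNReal.ofReal (Real.exp (ω₀ * h))) ω ≤
              (D k ∩ C k t).indicator (fun _ => (1 : ℝ≥0∞)) ω * P (Finset.Ioc k t) ω := by
            intro ω
            by_cases hω : ω ∈ D k ∩ C k t
            · rw [Set.indicator_of_mem hω, Set.indicator_of_mem hω, one_mul, hPW]
              apply ENNReal.ofReal_le_ofReal
              apply Real.exp_le_exp.mpr
              exact mul_le_mul_of_nonneg_left hω.2.1 hω₀.le
            · rw [Set.indicator_of_notMem hω, Set.indicator_of_notMem hω]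
              exact zero_le
          calc ENNReal.ofReal (Real.exp (ω₀ * h)) * μ (D k ∩ C k t)
              = ∫⁻ ω, (D k ∩ C k t).indicator
                  (fun _ => ENNReal.ofReal (Real.exp (ω₀ * h))) ω ∂μ := by
                rw [lintegral_indicator_const ((hDmeas k).inter (hCmeas k t))]
            _ ≤ _ := lintegral_mono hpt
        have hsplit : ∀ ω, (D k ∩ C k t).indicator (fun _ => (1 : ℝ≥0∞)) ω *
            P (Finset.Ioc k t) ω * P (Finset.Ioc t n) ω =
            (D k ∩ C k t).indicator (fun _ => (1 : ℝ≥0∞)) ω * P (Finset.Ioc k n) ω := by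
          intro ω
          rw [mul_assoc]
          congr 1
          rw [hP, ← Finset.prod_union (by
            simp only [Finset.disjoint_left, Finset.mem_Ioc]
            intro a ha; omega)]
          congr 1
          rw [Finset.Ioc_union_Ioc_eq_Ioc hkt.le htn]
        have hind𝔖 : MeasurableSet[𝔖 (Set.Iic t)] (D k ∩ C k t) :=
          (hSmonoSet (h𝔖mono (Set.Iic_subset_Iic.mpr hkt.le)) (hD𝔖 k)).inter
            (hSmonoSet (h𝔖mono Set.Ioc_subset_Iic_self) (hC𝔖 k t))
        have hmeasf : Measurable[𝔖 (Set.Iic t)]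
            (fun ω => (D k ∩ C k t).indicator (fun _ => (1 : ℝ≥0∞)) ω * P (Finset.Ioc k t) ω) :=
          ((hone (𝔖 (Set.Iic t))).indicator hind𝔖).mul
            ((hPmeas𝔖 (Finset.Ioc k t)).mono
              (h𝔖mono (by rw [Finset.coe_Ioc]; exact Set.Ioc_subset_Iic_self)) le_rfl)
        have hmeasg : Measurable[𝔖 (Set.Ioc t n)] (P (Finset.Ioc t n)) := by
          have := hPmeas𝔖 (Finset.Ioc t n)
          rwa [Finset.coe_Ioc] at this
        have hdisj2 : Disjoint (Set.Iic t) (Set.Ioc t n) := by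
          rw [Set.disjoint_left]; intro a ha ha2; exact absurd ha2.1 (not_lt.mpr ha)
        calc ENNReal.ofReal (Real.exp (ω₀ * h)) * μ (D k ∩ C k t)
            ≤ ∫⁻ ω, (D k ∩ C k t).indicator (fun _ => (1 : ℝ≥0∞)) ω *
                P (Finset.Ioc k t) ω ∂μ := stepA
          _ = (∫⁻ ω, (D k ∩ C k t).indicator (fun _ => (1 : ℝ≥0∞)) ω *
                P (Finset.Ioc k t) ω ∂μ) * ∫⁻ ω, P (Finset.Ioc t n) ω ∂μ := by
              rw [hP1, mul_one]
          _ = ∫⁻ ω, ((D k ∩ C k t).indicator (fun _ => (1 : ℝ≥0∞)) ω *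
                P (Finset.Ioc k t) ω) * P (Finset.Ioc t n) ω ∂μ :=
              (hmul hdisj2 hmeasf hmeasg).symm
          _ = ∫⁻ ω, (D k ∩ C k t).indicator (fun _ => (1 : ℝ≥0∞)) ω *
                P (Finset.Ioc k n) ω ∂μ := by simp_rw [hsplit]
    -- sum of indicators is at most the indicator of D k
    have hsumind : ∀ ω, ∑ t ∈ Finset.range n, (D k ∩ C k t).indicator (fun _ => (1 : ℝ≥0∞)) ω ≤
        (D k).indicator (fun _ => (1 : ℝ≥0∞)) ω := by
      intro ω
      by_cases hωD : ω ∈ D k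
      · rw [Set.indicator_of_mem hωD]
        by_cases hex : ∃ t ∈ Finset.range n, ω ∈ C k t
        · obtain ⟨t₀, ht₀mem, ht₀⟩ := hex
          rw [Finset.sum_eq_single_of_mem t₀ ht₀mem (fun t _ hne => by
            rw [Set.indicator_of_notMem]
            intro hωt
            rcases lt_or_gt_of_ne hne with h1 | h1
            · exact hCdisj k t t₀ h1 ω hωt.2 ht₀
            · exact hCdisj k t₀ t h1 ω ht₀ hωt.2)]
          rw [Set.indicator_of_mem (Set.mem_inter hωD ht₀)]
        · push_neg at hex
          rw [Finset.sum_eq_zero fun t ht => by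
            rw [Set.indicator_of_notMem (fun hωt => hex t ht hωt.2)]]
          exact zero_le_one
      · rw [Finset.sum_eq_zero fun t _ => by
          rw [Set.indicator_of_notMem (fun hωt => hωD hωt.1)]]
        exact zero_le
    calc ENNReal.ofReal (Real.exp (ω₀ * h)) * ∑ t ∈ Finset.range n, μ (D k ∩ C k t)
        = ∑ t ∈ Finset.range n, ENNReal.ofReal (Real.exp (ω₀ * h)) * μ (D k ∩ C k t) := by
          rw [Finset.mul_sum]
      _ ≤ ∑ t ∈ Finset.range n, ∫⁻ ω, (D k ∩ C k t).indicator (fun _ => (1 : ℝ≥0∞)) ω *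
            P (Finset.Ioc k n) ω ∂μ :=
          Finset.sum_le_sum fun t ht => step t (Finset.mem_range.mp ht).le
      _ = ∫⁻ ω, ∑ t ∈ Finset.range n, (D k ∩ C k t).indicator (fun _ => (1 : ℝ≥0∞)) ω *
            P (Finset.Ioc k n) ω ∂μ := by
          exact (lintegral_finset_sum _ (fun t _ =>
            ((hone _).indicator ((hDmeas k).inter (hCmeas k t))).mul
              (hPmeas (Finset.Ioc k n)))).symm
      _ ≤ ∫⁻ ω, (D k).indicator (fun _ => (1 : ℝ≥0∞)) ω * P (Finset.Ioc k n) ω ∂μ := by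
          refine lintegral_mono fun ω => ?_
          beta_reduce
          rw [← Finset.sum_mul]
          exact mul_le_mul_left (hsumind ω) _
      _ = μ (D k) * 1 := by
          rw [hmul (Set.Iic_disjoint_Ioc le_rfl) ((hone (𝔖 (Set.Iic k))).indicator (hD𝔖 k))
            (by have := hPmeas𝔖 (Finset.Ioc k n); rwa [Finset.coe_Ioc] at this),
            lintegral_indicator_const (hDmeas k), hP1, one_mul]
      _ = μ (D k) := mul_one _
  -- take n → ∞
  have key2 : ∀ k, ENNReal.ofReal (Real.exp (ω₀ * h)) * μ (⋃ t, D k ∩ C k t) ≤ μ (D k) := by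
    intro k
    calc ENNReal.ofReal (Real.exp (ω₀ * h)) * μ (⋃ t, D k ∩ C k t)
        ≤ ENNReal.ofReal (Real.exp (ω₀ * h)) * ∑' t, μ (D k ∩ C k t) :=
          mul_le_mul_right (measure_iUnion_le _) _
      _ = ⨆ n, ENNReal.ofReal (Real.exp (ω₀ * h)) * ∑ t ∈ Finset.range n, μ (D k ∩ C k t) := by
          rw [ENNReal.tsum_eq_iSup_nat, ENNReal.mul_iSup]
      _ ≤ μ (D k) := iSup_le fun n => key1 k n
  -- covering: every crossing path passes through some D k ∩ C k t
  have key3 : {ω | ∃ t, h ≤ s t ω} ⊆ ⋃ k, ⋃ t, D k ∩ C k t := by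
    intro ω hω
    have hex : ∃ t, h ≤ s t ω := hω
    obtain ⟨t₀, ht₀, hmin'⟩ : ∃ t₀, h ≤ s t₀ ω ∧ ∀ j, j < t₀ → ¬ h ≤ s j ω :=
      ⟨Nat.find hex, Nat.find_spec hex, fun j hj => Nat.find_min hex hj⟩
    have hmin : ∀ j, j < t₀ → s j ω < h := fun j hj => not_le.mp (hmin' j hj)
    have ht₀pos : 0 < t₀ := by
      rcases Nat.eq_zero_or_pos t₀ with h0 | h0
      · rw [h0, hs0 ω] at ht₀; exact absurd ht₀ (not_le.mpr hh)
      · exact h0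
    obtain ⟨k, hk0, hkle, hgr⟩ : ∃ k, s k ω = 0 ∧ k ≤ t₀ - 1 ∧
        ∀ j, k < j → j ≤ t₀ - 1 → ¬ s j ω = 0 :=
      ⟨Nat.findGreatest (fun j => s j ω = 0) (t₀ - 1),
        Nat.findGreatest_spec (P := fun j => s j ω = 0) (Nat.zero_le _) (hs0 ω), Nat.findGreatest_le _,
        fun j h1 h2 => Nat.findGreatest_is_greatest h1 h2⟩
    have hklt : k < t₀ := by omega
    have hnz : ∀ j, k < j → j < t₀ → s j ω ≠ 0 := fun j h1 h2 => hgr j h1 (by omega)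
    have hsum : ∀ j, k ≤ j → j ≤ t₀ → s j ω = ∑ i ∈ Finset.Ioc k j, δ i ω := by
      intro j hkj hjt
      induction j, hkj using Nat.le_induction with
      | base => rw [Finset.Ioc_self, Finset.sum_empty, hk0]
      | succ n hn ih =>
        have hsn : s n ω = ∑ i ∈ Finset.Ioc k n, δ i ω := ih (by omega)
        have hpos : 0 < s (n + 1) ω := by
          rcases eq_or_lt_of_le hjt with heq | hlt
          · rw [heq]; exact lt_of_lt_of_le hh ht₀
          · exact lt_of_le_of_ne (s_nonneg _ _) (Ne.symm (hnz (n + 1) (by omega) (by omega)))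
        have heq : s (n + 1) ω = s n ω + δ (n + 1) ω := by
          rw [hs n ω] at hpos ⊢
          rcases le_or_gt (s n ω + δ (n + 1) ω) 0 with hle | hlt
          · rw [max_eq_right hle] at hpos; exact absurd hpos (lt_irrefl 0)
          · exact max_eq_left hlt.le
        rw [heq, hsn, ← Finset.sum_Ioc_succ_top hn]
    refine Set.mem_iUnion.mpr ⟨k, Set.mem_iUnion.mpr ⟨t₀, ⟨⟨hk0, ?_⟩, ?_, ?_⟩⟩⟩
    · exact fun j hj => hmin j (lt_of_le_of_lt hj hklt)
    · rw [← hsum t₀ hklt.le le_rfl]; exact ht₀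
    · intro r hkr hrt
      rw [← hsum r hkr.le hrt.le]
      exact hmin r hrt
  -- counting: sum of μ (D k) bounds the expected stopping time
  have count : ∀ N, ∑ k ∈ Finset.range N, μ (D k) ≤ ∫⁻ ω, Texp ω ∂μ := by
    intro N
    have hptw : ∀ ω, ∑ k ∈ Finset.range N, (D k).indicator (fun _ => (1 : ℝ≥0∞)) ω ≤ Texp ω := by
      intro ω
      by_cases hex : ∃ t, h ≤ s t ω
      · set t₀ := Nat.find hex with ht₀def
        have hbound : ∑ k ∈ Finset.range N, (D k).indicator (fun _ => (1 : ℝ≥0∞)) ω ≤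
            ∑ k ∈ Finset.range N, if k < t₀ then (1 : ℝ≥0∞) else 0 := by
          apply Finset.sum_le_sum
          intro k _
          by_cases hk : k < t₀
          · rw [if_pos hk]
            exact Set.indicator_apply_le fun _ => le_rfl
          · rw [if_neg hk, Set.indicator_of_notMem]
            intro hωD
            exact absurd (Nat.find_spec hex) (not_le.mpr (hωD.2 t₀ (not_lt.mp hk)))
        have hcard : ∑ k ∈ Finset.range N, (if k < t₀ then (1 : ℝ≥0∞) else 0) ≤ (t₀ : ℝ≥0∞) := by
          rw [← Finset.sum_filter]
          simp only [Finset.sum_const, nsmul_eq_mul, mul_one]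
          have : Finset.filter (fun k => k < t₀) (Finset.range N) ⊆ Finset.range t₀ := by
            intro k hk
            simp only [Finset.mem_filter, Finset.mem_range] at hk ⊢
            exact hk.2
          calc ((Finset.filter (fun k => k < t₀) (Finset.range N)).card : ℝ≥0∞)
              ≤ ((Finset.range t₀).card : ℝ≥0∞) := by
                exact_mod_cast Nat.cast_le.mpr (Finset.card_le_card this)
            _ = (t₀ : ℝ≥0∞) := by rw [Finset.card_range]
        refine le_trans (le_trans hbound hcard) ?_
        exact le_iInf₂ fun t ht => Nat.cast_le.mpr (Nat.find_min' hex ht)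
      · exact le_iInf fun t => le_iInf fun ht => (hex ⟨t, ht⟩).elim
    calc ∑ k ∈ Finset.range N, μ (D k)
        = ∫⁻ ω, ∑ k ∈ Finset.range N, (D k).indicator (fun _ => (1 : ℝ≥0∞)) ω ∂μ := by
          rw [lintegral_finset_sum]
          · exact Finset.sum_congr rfl fun k _ => (lintegral_indicator_one (hDmeas k)).symm
          · exact fun k _ => measurable_one.indicator (hDmeas k)
      _ ≤ ∫⁻ ω, Texp ω ∂μ := lintegral_mono hptw
  -- put everything together
  have final : ENNReal.ofReal (Real.exp (ω₀ * h)) * μ {ω | ∃ t, h ≤ s t ω} ≤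
      ∫⁻ ω, Texp ω ∂μ := by
    calc ENNReal.ofReal (Real.exp (ω₀ * h)) * μ {ω | ∃ t, h ≤ s t ω}
        ≤ ENNReal.ofReal (Real.exp (ω₀ * h)) * μ (⋃ k, ⋃ t, D k ∩ C k t) :=
          mul_le_mul_right (measure_mono key3) _
      _ ≤ ENNReal.ofReal (Real.exp (ω₀ * h)) * ∑' k, μ (⋃ t, D k ∩ C k t) :=
          mul_le_mul_right (measure_iUnion_le _) _
      _ = ∑' k, ENNReal.ofReal (Real.exp (ω₀ * h)) * μ (⋃ t, D k ∩ C k t) :=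
          ENNReal.tsum_mul_left.symm
      _ ≤ ∑' k, μ (D k) := ENNReal.tsum_le_tsum fun k => key2 k
      _ = ⨆ N, ∑ k ∈ Finset.range N, μ (D k) := ENNReal.tsum_eq_iSup_nat
      _ ≤ ∫⁻ ω, Texp ω ∂μ := iSup_le count
  by_cases hE : μ {ω | ∀ t, s t ω < h} = 0
  · have hEmeas : MeasurableSet {ω | ∀ t, s t ω < h} := by
      have : {ω | ∀ t, s t ω < h} = ⋂ t, {ω | s t ω < h} := by ext ω; simp
      rw [this]
      exact MeasurableSet.iInter fun t => measurableSet_lt (meas_s t) measurable_const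
    have hcompl : {ω | ∃ t, h ≤ s t ω} = {ω | ∀ t, s t ω < h}ᶜ := by
      ext ω; simp [not_lt]
    have h1 : μ {ω | ∃ t, h ≤ s t ω} = 1 := by
      rw [hcompl, measure_compl hEmeas (measure_ne_top μ _), hE, measure_univ, tsub_zero]
    calc ENNReal.ofReal (Real.exp (ω₀ * h))
        = ENNReal.ofReal (Real.exp (ω₀ * h)) * μ {ω | ∃ t, h ≤ s t ω} := by
          rw [h1, mul_one]
      _ ≤ ∫⁻ ω, Texp ω ∂μ := final
  · have hEmeas : MeasurableSet {ω | ∀ t, s t ω < h} := by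
      have : {ω | ∀ t, s t ω < h} = ⋂ t, {ω | s t ω < h} := by ext ω; simp
      rw [this]
      exact MeasurableSet.iInter fun t => measurableSet_lt (meas_s t) measurable_const
    have hptw : ∀ ω, Set.indicator {ω | ∀ t, s t ω < h} (fun _ => (⊤ : ℝ≥0∞)) ω ≤ Texp ω := by
      intro ω
      by_cases hω : ω ∈ {ω | ∀ t, s t ω < h}
      · rw [Set.indicator_of_mem hω]
        exact le_iInf fun t => le_iInf fun ht => ((not_le.mpr (hω t)) ht).elim
      · rw [Set.indicator_of_notMem hω]; exact zero_le
    have h1 : (⊤ : ℝ≥0∞) ≤ ∫⁻ ω, Texp ω ∂μ := by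
      calc (⊤ : ℝ≥0∞) = ⊤ * μ {ω | ∀ t, s t ω < h} := (ENNReal.top_mul hE).symm
        _ = ∫⁻ ω, Set.indicator {ω | ∀ t, s t ω < h} (fun _ => (⊤ : ℝ≥0∞)) ω ∂μ :=
            (lintegral_indicator_const hEmeas ⊤).symm
        _ ≤ ∫⁻ ω, Texp ω ∂μ := lintegral_mono hptw
    exact le_trans le_top h1
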